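/- For any connected graph G with n vertices and e(G) edges, the largest eigenvalue of its adjacency matrix satisfies λ₁(G) ≤ √(2·e(G) − n + 1). -/

import Mathlib

/-- The largest eigenvalue (index) of a real symmetric matrix. -/
noncomputable def lam1 {n : ℕ} (A : Matrix (Fin n) (Fin n) ℝ) (hA : A.IsHermitian) : ℝ :=
  ⨆ i, hA.eigenvalues i


open Finset Matrix

set_option maxRecDepth 8000

private lemma deg_pos_of_conn {n : ℕ} (G : SimpleGraph (Fin n)) [DecidableRel G.Adj]
    (hconn : G.Connected) {v w : Fin n} (hvw : v ≠ w) : 1 ≤ G.degree v := by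
  rw [Nat.one_le_iff_ne_zero, ← Nat.pos_iff_ne_zero, SimpleGraph.degree_pos_iff_exists_adj]
  obtain ⟨p⟩ := hconn.preconnected v w
  cases p with
  | nil => exact absurd rfl hvw
  | cons h _ => exact ⟨_, h⟩

private lemma rowsum_adj {n : ℕ} (G : SimpleGraph (Fin n)) [DecidableRel G.Adj] (u : Fin n) :
    ∑ j, G.adjMatrix ℝ u j = G.degree u := by
  simp [SimpleGraph.adjMatrix_apply, Finset.sum_boole, SimpleGraph.degree,
    SimpleGraph.neighborFinset_eq_filter]

private lemma key_nat {n : ℕ} (G : SimpleGraph (Fin n)) [DecidableRel G.Adj]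
    (hconn : G.Connected) (i : Fin n) :
    (∑ u ∈ G.neighborFinset i, G.degree u) + (n - 1) ≤ 2 * G.edgeFinset.card := by
  rw [← SimpleGraph.sum_degrees_eq_twice_card_edges]
  have hsplit : ∑ v, G.degree v =
      (∑ u ∈ G.neighborFinset i, G.degree u) + ∑ u ∈ (G.neighborFinset i)ᶜ, G.degree u :=
    (Finset.sum_add_sum_compl _ _).symm
  rw [hsplit]
  have hi : i ∈ (G.neighborFinset i)ᶜ := by
    simp [SimpleGraph.neighborFinset_eq_filter]
  have h1 : ∑ u ∈ (G.neighborFinset i)ᶜ, G.degree u =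
      G.degree i + ∑ u ∈ (G.neighborFinset i)ᶜ \ {i}, G.degree u :=
    Finset.sum_eq_add_sum_sdiff_singleton_of_mem hi _
  have h2 : #((G.neighborFinset i)ᶜ \ {i}) ≤ ∑ u ∈ (G.neighborFinset i)ᶜ \ {i}, G.degree u :=
    by simpa using Finset.card_nsmul_le_sum _ _ 1 fun u hu =>
      deg_pos_of_conn G hconn (Finset.notMem_singleton.mp (Finset.mem_sdiff.mp hu).2)
  have hc1 : #((G.neighborFinset i)ᶜ \ {i}) = #((G.neighborFinset i)ᶜ) - 1 := by
    rw [Finset.card_sdiff_of_subset (by simpa using hi)]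
    simp
  have hc2 : #((G.neighborFinset i)ᶜ) = n - G.degree i := by
    rw [Finset.card_compl, SimpleGraph.card_neighborFinset_eq_degree]
    simp
  have hdlt : G.degree i < n := by
    have := G.degree_lt_card_verts i
    simpa using this
  omega

private lemma rowsum_sq {n : ℕ} (G : SimpleGraph (Fin n)) [DecidableRel G.Adj]
    (hconn : G.Connected) (i : Fin n) :
    ∑ j, (G.adjMatrix ℝ * G.adjMatrix ℝ) i j ≤ 2 * (G.edgeFinset.card : ℝ) - n + 1 := by
  have h1 : ∑ j, (G.adjMatrix ℝ * G.adjMatrix ℝ) i j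
      = ∑ u ∈ G.neighborFinset i, (G.degree u : ℝ) := by
    simp only [SimpleGraph.adjMatrix_mul_apply]
    rw [Finset.sum_comm]
    exact Finset.sum_congr rfl fun u _ => rowsum_adj G u
  rw [h1]
  have h2 := key_nat G hconn i
  have h3 : ((∑ u ∈ G.neighborFinset i, G.degree u : ℕ) : ℝ) + ((n - 1 : ℕ) : ℝ)
      ≤ 2 * (G.edgeFinset.card : ℝ) := by
    rw [← Nat.cast_add]
    calc ((_ : ℕ) : ℝ) ≤ ((2 * G.edgeFinset.card : ℕ) : ℝ) := Nat.cast_le.mpr h2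
    _ = 2 * (G.edgeFinset.card : ℝ) := by push_cast; ring
  have h4 : (n : ℝ) - 1 ≤ ((n - 1 : ℕ) : ℝ) := by
    rcases Nat.eq_zero_or_pos n with h | h
    · simp [h]
    · rw [Nat.cast_sub h]; simp
  push_cast at h3 ⊢
  linarith

theorem stmt0' {n : ℕ} (hn : 1 ≤ n) (G : SimpleGraph (Fin n)) [DecidableRel G.Adj]
    (hconn : G.Connected) (hA : (G.adjMatrix ℝ).IsHermitian) :
    (⨆ i, hA.eigenvalues i) ≤ Real.sqrt (2 * (G.edgeFinset.card : ℝ) - n + 1) := by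
  have hne : Nonempty (Fin n) := ⟨⟨0, hn⟩⟩
  set c : ℝ := 2 * (G.edgeFinset.card : ℝ) - n + 1 with hc
  apply ciSup_le
  intro i0
  set μ := hA.eigenvalues i0 with hμ
  set v : Fin n → ℝ := ⇑(hA.eigenvectorBasis i0) with hv
  have hev : G.adjMatrix ℝ *ᵥ v = μ • v := hA.mulVec_eigenvectorBasis i0
  have hvne : v ≠ 0 := by
    intro h
    have := (hA.eigenvectorBasis).orthonormal.1 i0
    rw [show (hA.eigenvectorBasis i0 : EuclideanSpace ℝ (Fin n)) = 0 from by ext j; simpa [hv] using congrFun h j] at this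
    simp at this
  -- pick coordinate with max |v j|
  obtain ⟨j, -, hj⟩ := Finset.exists_max_image (Finset.univ : Finset (Fin n))
    (fun j => |v j|) ⟨Classical.arbitrary _, Finset.mem_univ _⟩
  have hjpos : 0 < |v j| := by
    rcases Function.ne_iff.mp hvne with ⟨k, hk⟩
    exact lt_of_lt_of_le (abs_pos.mpr hk) (hj k (Finset.mem_univ k))
  have hev2 : (G.adjMatrix ℝ * G.adjMatrix ℝ) *ᵥ v = (μ ^ 2) • v := by
    rw [← Matrix.mulVec_mulVec, hev, Matrix.mulVec_smul, hev, smul_smul, sq]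
  have hentry : ∀ a b : Fin n, 0 ≤ (G.adjMatrix ℝ * G.adjMatrix ℝ) a b := by
    intro a b
    rw [Matrix.mul_apply]
    exact Finset.sum_nonneg fun k _ => mul_nonneg (by simp [SimpleGraph.adjMatrix_apply]; positivity)
      (by simp [SimpleGraph.adjMatrix_apply]; positivity)
  have hmain : μ ^ 2 * |v j| ≤ c * |v j| := by
    have h1 : μ ^ 2 * |v j| = |((G.adjMatrix ℝ * G.adjMatrix ℝ) *ᵥ v) j| := by
      rw [hev2]; simp [abs_mul, sq_abs, abs_of_nonneg (sq_nonneg μ)]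
    rw [h1, Matrix.mulVec, dotProduct]
    calc |∑ k, (G.adjMatrix ℝ * G.adjMatrix ℝ) j k * v k|
        ≤ ∑ k, |(G.adjMatrix ℝ * G.adjMatrix ℝ) j k * v k| := Finset.abs_sum_le_sum_abs _ _
      _ ≤ ∑ k, (G.adjMatrix ℝ * G.adjMatrix ℝ) j k * |v j| := by
          apply Finset.sum_le_sum
          intro k _
          rw [abs_mul, abs_of_nonneg (hentry j k)]
          exact mul_le_mul_of_nonneg_left (hj k (Finset.mem_univ k)) (hentry j k)
      _ = (∑ k, (G.adjMatrix ℝ * G.adjMatrix ℝ) j k) * |v j| := by rw [← Finset.sum_mul]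
      _ ≤ c * |v j| := mul_le_mul_of_nonneg_right (rowsum_sq G hconn j) hjpos.le
  have hμ2 : μ ^ 2 ≤ c := le_of_mul_le_mul_right hmain hjpos
  calc μ ≤ |μ| := le_abs_self μ
    _ = Real.sqrt (μ ^ 2) := (Real.sqrt_sq_eq_abs μ).symm
    _ ≤ Real.sqrt c := Real.sqrt_le_sqrt hμ2

/-- For any connected graph `G` with `n` vertices and `e(G)` edges, the largest eigenvalue of
its adjacency matrix satisfies `λ₁(G) ≤ √(2·e(G) − n + 1)`. -/
theorem stmt0 {n : ℕ} (hn : 1 ≤ n) (G : SimpleGraph (Fin n)) [DecidableRel G.Adj]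
    (hconn : G.Connected) (hA : (G.adjMatrix ℝ).IsHermitian) :
    lam1 (G.adjMatrix ℝ) hA ≤ Real.sqrt (2 * (G.edgeFinset.card : ℝ) - n + 1) :=
  stmt0' hn G hconn hA
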